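/- The worst-case objective value achieved by the optimal uncertainty-aware weight φ* is no larger than that achieved by the plain weight 1 used by BIPS: sup_{β ∈ [b⁻, b⁺]} T(φ*, β) ≤ sup_{β ∈ [b⁻, b⁺]} T(1, β), where φ* = min( λ / ( (λ/η)e^{−u} + (ηπ²/β̂²)e^{u} ), 2η/(e^{u} + e^{−u}) ). In particular, the UIPS estimator with weight φ* achieves a smaller upper bound on its mean squared error than the BIPS estimator. -/

import Mathlib

set_option maxHeartbeats 1000000 in
lemma core_ineq (lam p α m s φ₀ c φ : ℝ) (hlam : 0 < lam) (hp : 0 ≤ p) (hα : 0 < α)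
    (hαm : α ≤ m) (hφ₀ : φ₀ * (lam * α ^ 2 + p) = lam * α) (hc : c * (α + m) = 2)
    (hφ : φ = min φ₀ c) (hs1 : α ≤ s) (hs2 : s ≤ m) :
    lam * (s * φ - 1) ^ 2 + p * φ ^ 2
      ≤ max (lam * (α - 1) ^ 2 + p * 1 ^ 2) (lam * (m - 1) ^ 2 + p * 1 ^ 2) := by
  have hm : 0 < m := lt_of_lt_of_le hα hαm
  have hD : 0 < lam * α ^ 2 + p := by positivity
  have hφ₀pos : 0 < φ₀ := by nlinarith [mul_pos hlam hα]
  have hcpos : 0 < c := by nlinarith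
  have hφpos : 0 < φ := by rw [hφ]; exact lt_min hφ₀pos hcpos
  have hφc : φ ≤ c := by rw [hφ]; exact min_le_right _ _
  have h2 : φ * (α + m) ≤ 2 := by nlinarith
  have hsφ1 : α * φ ≤ s * φ := by nlinarith
  have hsφ2 : s * φ ≤ m * φ := by nlinarith
  have key1 : (s * φ - 1) ^ 2 ≤ (α * φ - 1) ^ 2 := by
    nlinarith [mul_nonneg (sub_nonneg.2 hsφ1) (by nlinarith : (0:ℝ) ≤ 2 - s * φ - α * φ)]
  have step1 : lam * (s * φ - 1) ^ 2 + p * φ ^ 2 ≤ lam * (α * φ - 1) ^ 2 + p * φ ^ 2 := by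
    nlinarith
  rcases le_or_gt 1 c with h1c | h1c
  · refine le_trans step1 (le_trans ?_ (le_max_left _ _))
    rcases le_total φ₀ c with h | h
    · have hφ' : φ = φ₀ := by rw [hφ, min_eq_left h]
      rw [hφ']
      have hexp : lam * (α - 1) ^ 2 + p * 1 ^ 2 - (lam * (α * φ₀ - 1) ^ 2 + p * φ₀ ^ 2)
          = (lam * α ^ 2 + p) * (1 - φ₀) ^ 2 := by
        linear_combination (2 * (1 - φ₀)) * hφ₀
      nlinarith [mul_nonneg hD.le (sq_nonneg (1 - φ₀))]
    · have hφ' : φ = c := by rw [hφ, min_eq_right h]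
      rw [hφ']
      have hexp : lam * (α - 1) ^ 2 + p * 1 ^ 2 - (lam * (α * c - 1) ^ 2 + p * c ^ 2)
          = (lam * α ^ 2 + p) * (c - 1) * (2 * φ₀ - 1 - c) := by
        linear_combination (2 * (1 - c)) * hφ₀
      nlinarith [mul_nonneg (mul_nonneg hD.le (by linarith : (0:ℝ) ≤ c - 1))
        (by linarith : (0:ℝ) ≤ 2 * φ₀ - 1 - c)]
  · refine le_trans step1 (le_trans ?_ (le_max_right _ _))
    have hgc : lam * (α * φ - 1) ^ 2 + p * φ ^ 2 ≤ lam * (α * c - 1) ^ 2 + p * c ^ 2 := by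
      rcases le_total φ₀ c with h | h
      · have hφ' : φ = φ₀ := by rw [hφ, min_eq_left h]
        rw [hφ']
        have hexp : lam * (α * c - 1) ^ 2 + p * c ^ 2 - (lam * (α * φ₀ - 1) ^ 2 + p * φ₀ ^ 2)
            = (lam * α ^ 2 + p) * (c - φ₀) ^ 2 := by
          linear_combination (2 * (c - φ₀)) * hφ₀
        nlinarith [mul_nonneg hD.le (sq_nonneg (c - φ₀))]
      · have hφ' : φ = c := by rw [hφ, min_eq_right h]
        rw [hφ']
    refine le_trans hgc ?_
    have hsum : α * c + m * c = 2 := by linear_combination hc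
    have hmc1 : (1:ℝ) ≤ m * c := by nlinarith
    have hmcm : m * c ≤ m := by nlinarith
    have hsq : (α * c - 1) ^ 2 = (m * c - 1) ^ 2 := by
      have : α * c - 1 = -(m * c - 1) := by linarith
      rw [this]; ring
    rw [hsq]
    have h1 : lam * (m * c - 1) ^ 2 ≤ lam * (m - 1) ^ 2 := by
      nlinarith [mul_nonneg (sub_nonneg.2 hmcm) (by linarith : (0:ℝ) ≤ m + m * c - 2)]
    have h2' : p * c ^ 2 ≤ p * 1 ^ 2 := by nlinarith [mul_nonneg hp (by nlinarith : (0:ℝ) ≤ 1 - c ^ 2)]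
    linarith

/-- The bias-variance objective `T(φ, β) = λ(βφ/β̂ − 1)² + (π²/β̂²)φ²`. -/
noncomputable def T (lam bhat pi : ℝ) (φ β : ℝ) : ℝ :=
  lam * (β * φ / bhat - 1) ^ 2 + pi ^ 2 / bhat ^ 2 * φ ^ 2

set_option maxHeartbeats 1000000 in
/-- The worst-case objective value (over `β ∈ [b⁻, b⁺]` with `b⁻ = (β̂/η)e^{−u}` and
`b⁺ = (β̂/η)e^{u}`) achieved by the optimal uncertainty-aware weight
`φ* = min( λ / ((λ/η)e^{−u} + (ηπ²/β̂²)e^{u}), 2η/(e^{u} + e^{−u}) )` is no larger than that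
achieved by the plain weight `1` used by BIPS: UIPS achieves a smaller upper bound on its
mean squared error than BIPS. -/
theorem stmt_7 (lam bhat pi η u : ℝ) (hlam : 0 < lam) (hbhat : 0 < bhat) (hpi : 0 ≤ pi)
    (hη : 0 < η) (hu : 0 ≤ u) :
    sSup ((fun β => T lam bhat pi
        (min (lam / (lam / η * Real.exp (-u) + η * pi ^ 2 / bhat ^ 2 * Real.exp u))
          (2 * η / (Real.exp u + Real.exp (-u)))) β) ''
        Set.Icc (bhat / η * Real.exp (-u)) (bhat / η * Real.exp u))
      ≤ sSup ((fun β => T lam bhat pi 1 β) ''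
          Set.Icc (bhat / η * Real.exp (-u)) (bhat / η * Real.exp u)) := by
  have hE : 0 < Real.exp u := Real.exp_pos u
  have hEn : 0 < Real.exp (-u) := Real.exp_pos _
  have hEnE : Real.exp (-u) * Real.exp u = 1 := by
    rw [← Real.exp_add]; simp
  have hle : Real.exp (-u) ≤ Real.exp u := Real.exp_le_exp.2 (by linarith)
  have hlohi : bhat / η * Real.exp (-u) ≤ bhat / η * Real.exp u := by
    apply mul_le_mul_of_nonneg_left hle (by positivity)
  have hne : (Set.Icc (bhat / η * Real.exp (-u)) (bhat / η * Real.exp u)).Nonempty :=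
    Set.nonempty_Icc.2 hlohi
  have hcont : Continuous fun β => T lam bhat pi 1 β := by
    unfold T; fun_prop
  have hbdd : BddAbove ((fun β => T lam bhat pi 1 β) ''
      Set.Icc (bhat / η * Real.exp (-u)) (bhat / η * Real.exp u)) :=
    (isCompact_Icc.image hcont).bddAbove
  apply csSup_le (hne.image _)
  rintro x ⟨β, hβ, rfl⟩
  have h1 : T lam bhat pi 1 (bhat / η * Real.exp (-u)) ≤ sSup ((fun β => T lam bhat pi 1 β) ''
      Set.Icc (bhat / η * Real.exp (-u)) (bhat / η * Real.exp u)) :=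
    le_csSup hbdd ⟨_, Set.left_mem_Icc.2 hlohi, rfl⟩
  have h2 : T lam bhat pi 1 (bhat / η * Real.exp u) ≤ sSup ((fun β => T lam bhat pi 1 β) ''
      Set.Icc (bhat / η * Real.exp (-u)) (bhat / η * Real.exp u)) :=
    le_csSup hbdd ⟨_, Set.right_mem_Icc.2 hlohi, rfl⟩
  refine le_trans ?_ (max_le h1 h2)
  have e1 : ∀ ψ : ℝ, T lam bhat pi ψ β
      = lam * ((β / bhat) * ψ - 1) ^ 2 + (pi ^ 2 / bhat ^ 2) * ψ ^ 2 := by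
    intro ψ; unfold T; ring
  have e2 : T lam bhat pi 1 (bhat / η * Real.exp (-u))
      = lam * ((Real.exp (-u) / η) - 1) ^ 2 + (pi ^ 2 / bhat ^ 2) * 1 ^ 2 := by
    unfold T
    rw [show bhat / η * Real.exp (-u) * 1 / bhat = Real.exp (-u) / η by
      field_simp]
  have e3 : T lam bhat pi 1 (bhat / η * Real.exp u)
      = lam * ((Real.exp u / η) - 1) ^ 2 + (pi ^ 2 / bhat ^ 2) * 1 ^ 2 := by
    unfold T
    rw [show bhat / η * Real.exp u * 1 / bhat = Real.exp u / η by
      field_simp]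
  simp only [e1, e2, e3]
  have hQ : 0 < lam / η * Real.exp (-u) + η * pi ^ 2 / bhat ^ 2 * Real.exp u := by
    positivity
  have hφ₀eq : (lam / (lam / η * Real.exp (-u) + η * pi ^ 2 / bhat ^ 2 * Real.exp u))
      * (lam * (Real.exp (-u) / η) ^ 2 + pi ^ 2 / bhat ^ 2)
      = lam * (Real.exp (-u) / η) := by
    rw [div_mul_eq_mul_div, div_eq_iff hQ.ne']
    field_simp
    linear_combination (-(η ^ 2 * pi ^ 2)) * hEnE
  have hceq : (2 * η / (Real.exp u + Real.exp (-u)))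
      * (Real.exp (-u) / η + Real.exp u / η) = 2 := by
    field_simp
    ring
  have hs1 : Real.exp (-u) / η ≤ β / bhat := by
    rw [div_le_div_iff₀ hη hbhat]
    have h' := mul_le_mul_of_nonneg_right hβ.1 hη.le
    have h'' : bhat / η * Real.exp (-u) * η = Real.exp (-u) * bhat := by
      field_simp
    linarith
  have hs2 : β / bhat ≤ Real.exp u / η := by
    rw [div_le_div_iff₀ hbhat hη]
    have h' := mul_le_mul_of_nonneg_right hβ.2 hη.le
    have h'' : bhat / η * Real.exp u * η = Real.exp u * bhat := by
      field_simp
    linarith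
  exact core_ineq lam (pi ^ 2 / bhat ^ 2) (Real.exp (-u) / η) (Real.exp u / η) (β / bhat)
    _ _ _ hlam (by positivity) (by positivity)
    (by gcongr) hφ₀eq hceq rfl hs1 hs2
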